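/- arXiv:2111.02257 — 2 statements merged into one kernel-verified Lean document; each statement's English description precedes it below -/
import Mathlib

section
/- Completeness of verification for honestly generated linkable ring signatures: Let n ≥ 1, let pk : Fin n → E be a ring of public keys, let π be an index with pk π = sk • G for a secret key sk ∈ ZMod g, let L ∈ E and set the tag T = sk • L. Let h : E × E → ZMod g be an arbitrary function (modeling the hash c ↦ H(m ∥ T ∥ A ∥ B) for a fixed message m and tag T). Generate a signature as in the scheme: choose u, s'_π ∈ ZMod g, set c_π = h(s'_π • G + u • pk_π, s'_π • L + u • T); then, traversing the indices cyclically i = π+1, …, n, 1, …, π−1 (indices mod n), choose s_i ∈ ZMod g and set c_i = h(s_i • G + c_{i−1} • pk_i, s_i • L + c_{i−1} • T); finally set s_π = s'_π + sk * (u − c_{π−1}). Then the verification recomputation — starting from c'_0 = c_n and setting, for i = 1, …, n, A'_i = s_i • G + c'_{i−1} • pk_i, B'_i = s_i • L + c'_{i−1} • T, c'_i = h(A'_i, B'_i) — satisfies c'_i = c_i for every i = 1, …, n; in particular c'_n = c_n = c'_0, so the Verify algorithm accepts the honestly generated signature. -/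
/-- Completeness of verification for honestly generated linkable ring signatures.
Indices `0, …, n-1` of `Fin n` correspond to the paper's indices `1, …, n`; the
cyclic predecessor of index `i : Fin n` is `i - 1`.  The hypotheses on `c` and `s`
state that the signature was generated as in the scheme (with hash `h`, signer
index `π`, secret key `sk`, `pk π = sk • G`, tag `T = sk • L`, and randomness
`u, s'`).  The function `v` is the verification recomputation chain, starting from
`v 0 = c_n` (the anchor) and computing `v (k+1) = h (A'_{k+1}, B'_{k+1})`.  The
conclusion is `c'_i = c_i` for every `i = 1, …, n`, and in particular
`c'_n = c'_0`, so Verify accepts. -/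
theorem verify_accepts_honest_signature
    {g : ℕ} [Fact (Nat.Prime g)] {E : Type*} [AddCommGroup E] [Module (ZMod g) E]
    (n : ℕ) [NeZero n]
    (G L : E) (pk : Fin n → E) (π : Fin n) (sk : ZMod g)
    (hpk : pk π = sk • G)
    (T : E) (hT : T = sk • L)
    (h : E × E → ZMod g)
    (u s' : ZMod g)
    (s c : Fin n → ZMod g)
    (hcπ : c π = h (s' • G + u • pk π, s' • L + u • T))
    (hc : ∀ i : Fin n, i ≠ π →
      c i = h (s i • G + c (i - 1) • pk i, s i • L + c (i - 1) • T))
    (hsπ : s π = s' + sk * (u - c (π - 1)))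
    (v : ℕ → ZMod g)
    (hv0 : v 0 = c ⟨n - 1, Nat.sub_lt (Nat.pos_of_neZero n) Nat.one_pos⟩)
    (hv : ∀ k (hk : k < n),
      v (k + 1) = h (s ⟨k, hk⟩ • G + v k • pk ⟨k, hk⟩, s ⟨k, hk⟩ • L + v k • T)) :
    (∀ k (hk : k < n), v (k + 1) = c ⟨k, hk⟩) ∧ v n = v 0 := by
  have hn : 0 < n := Nat.pos_of_neZero n
  -- the generation equation holds at π as well
  have key : ∀ i : Fin n,
      c i = h (s i • G + c (i - 1) • pk i, s i • L + c (i - 1) • T) := by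
    intro i
    by_cases hi : i = π
    · subst hi
      rw [hcπ, hsπ, hpk, hT]
      refine congrArg h (Prod.ext ?_ ?_) <;> module
    · exact hc i hi
  -- index arithmetic
  have pred0 : ((⟨0, hn⟩ : Fin n) - 1)
      = ⟨n - 1, Nat.sub_lt hn Nat.one_pos⟩ := by
    apply Fin.ext
    rw [Fin.sub_def]
    simp only [Fin.val_one']
    rcases Nat.eq_or_lt_of_le hn with h1 | h1
    · simp [← h1]
    · have : 1 % n = 1 := Nat.mod_eq_of_lt h1
      rw [this]
      simp [Nat.mod_eq_of_lt (Nat.sub_lt hn Nat.one_pos)]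
  have predS : ∀ k (hk : k + 1 < n),
      ((⟨k + 1, hk⟩ : Fin n) - 1) = ⟨k, Nat.lt_of_succ_lt hk⟩ := by
    intro k hk
    apply Fin.ext
    rw [Fin.sub_def]
    have h1 : 1 < n := lt_of_le_of_lt (Nat.le_add_left 1 k) hk
    simp only [Fin.val_one', Nat.mod_eq_of_lt h1]
    have : n - 1 + (k + 1) = n + k := by omega
    rw [this, Nat.add_mod_left, Nat.mod_eq_of_lt (Nat.lt_of_succ_lt hk)]
  have main : ∀ k (hk : k < n), v (k + 1) = c ⟨k, hk⟩ := by
    intro k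
    induction k with
    | zero =>
      intro hk
      have hk' : (⟨0, hk⟩ : Fin n) = ⟨0, hn⟩ := rfl
      rw [hv 0 hk, key ⟨0, hk⟩, hk', pred0, hv0]
    | succ k ih =>
      intro hk
      rw [hv (k + 1) hk, key ⟨k + 1, hk⟩, predS k hk,
        ih (Nat.lt_of_succ_lt hk)]
  refine ⟨main, ?_⟩
  have : n = (n - 1) + 1 := by omega
  rw [this, main (n - 1) (Nat.sub_lt hn Nat.one_pos), hv0]
end

section
/- Combined key-and-tag extraction from a fork at a common index: Let G, L, T ∈ E, pk ∈ E, and s, s*, c, c* ∈ ZMod g with c ≠ c*. Suppose both fork branches agree on the verification values at the fork index, i.e. s • G + c • pk = s* • G + c* • pk and s • L + c • T = s* • L + c* • T. Then the extracted scalar sk := (s − s*) * (c* − c)⁻¹ ∈ ZMod g simultaneously satisfies pk = sk • G and T = sk • L; that is, the fork yields a secret key matching the public key at the fork index whose associated linkability tag is exactly the tag of the forged signature. -/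
/-- Combined key-and-tag extraction from a fork at a common index: if both fork
branches agree on the verification values `s • G + c • pk = s* • G + c* • pk` and
`s • L + c • T = s* • L + c* • T` with `c ≠ c*`, then the extracted scalar
`sk = (s - s*) * (c* - c)⁻¹` satisfies both `pk = sk • G` and `T = sk • L`. -/
theorem key_and_tag_extraction_from_fork
    {g : ℕ} [Fact (Nat.Prime g)] {E : Type*} [AddCommGroup E] [Module (ZMod g) E]
    (G L T pk : E) (s sstar c cstar : ZMod g)
    (hcc : c ≠ cstar)
    (hA : s • G + c • pk = sstar • G + cstar • pk)
    (hB : s • L + c • T = sstar • L + cstar • T) :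
    pk = ((s - sstar) * (cstar - c)⁻¹) • G ∧
      T = ((s - sstar) * (cstar - c)⁻¹) • L := by
  have hne : cstar - c ≠ 0 := sub_ne_zero.mpr (Ne.symm hcc)
  have hinv : (cstar - c)⁻¹ * (cstar - c) = 1 := inv_mul_cancel₀ hne
  constructor
  · have h1 : (cstar - c) • pk = (s - sstar) • G := by
      rw [sub_smul, sub_smul]
      linear_combination (norm := abel) -hA
    calc pk = ((cstar - c)⁻¹ * (cstar - c)) • pk := by rw [hinv, one_smul]
      _ = (cstar - c)⁻¹ • ((cstar - c) • pk) := by rw [mul_smul]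
      _ = (cstar - c)⁻¹ • ((s - sstar) • G) := by rw [h1]
      _ = ((s - sstar) * (cstar - c)⁻¹) • G := by rw [← mul_smul, mul_comm]
  · have h1 : (cstar - c) • T = (s - sstar) • L := by
      rw [sub_smul, sub_smul]
      linear_combination (norm := abel) -hB
    calc T = ((cstar - c)⁻¹ * (cstar - c)) • T := by rw [hinv, one_smul]
      _ = (cstar - c)⁻¹ • ((cstar - c) • T) := by rw [mul_smul]
      _ = (cstar - c)⁻¹ • ((s - sstar) • L) := by rw [h1]
      _ = ((s - sstar) * (cstar - c)⁻¹) • L := by rw [← mul_smul, mul_comm]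
end
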